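/- Let (X,d) be a geodesic space and h : X → ℝ a convex function (convex along all constant-speed geodesics). Then for all x, y ∈ X, h(x) - h(y) ≤ d(x,y)·|∇⁻h|(x), where |∇⁻h|(x) = limsup_{z→x}[h(z)-h(x)]₋/d(z,x). Consequently, for every t > 0, 0 ≤ (h(x) - Q_t h(x))/t ≤ (1/4)|∇⁻h(x)|², where Q_t h(x) = inf_y{h(y) + d(x,y)²/t}. -/

import Mathlib

open Filter Set

/-- A constant-speed geodesic parametrized by `[0,1]`:
`d(γ s, γ t) = |s - t| d(γ 0, γ 1)` for all `s, t ∈ [0,1]`. -/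
def IsUnitGeodesic {X : Type*} [MetricSpace X] (γ : ℝ → X) : Prop :=
  ∀ s ∈ Icc (0:ℝ) 1, ∀ t ∈ Icc (0:ℝ) 1, dist (γ s) (γ t) = |s - t| * dist (γ 0) (γ 1)

/-- The descending slope `|∇⁻h|(x) = limsup_{z → x} [h(z)-h(x)]₋ / d(z,x)`
(equal to `0` at isolated points by the real limsup convention). -/
noncomputable def descSlope {X : Type*} [MetricSpace X] (h : X → ℝ) (x : X) : ℝ :=
  limsup (fun z => max (h x - h z) 0 / dist z x) (nhdsWithin x {x}ᶜ)

private lemma slope_bddAbove {X : Type*} [MetricSpace X] (h : X → ℝ) (x : X)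
    (hloclip : ∃ ε > (0:ℝ), ∃ K : NNReal, LipschitzOnWith K h (Metric.ball x ε)) :
    IsBoundedUnder (· ≤ ·) (nhdsWithin x {x}ᶜ)
      (fun z => max (h x - h z) 0 / dist z x) := by
  obtain ⟨ε, hε, K, hK⟩ := hloclip
  refine ⟨(K : ℝ), eventually_map.mpr ?_⟩
  filter_upwards [nhdsWithin_le_nhds (Metric.ball_mem_nhds x hε)] with z hz
  rcases eq_or_ne z x with rfl | hzx
  · simpa using (K : ℝ).coe_nonneg
  · have hd : 0 < dist z x := dist_pos.mpr hzx
    rw [div_le_iff₀ hd]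
    have h1 : max (h x - h z) 0 ≤ |h x - h z| := max_le (le_abs_self _) (abs_nonneg _)
    have h2 : |h x - h z| ≤ (K : ℝ) * dist x z := by
      have := hK.dist_le_mul x (Metric.mem_ball_self hε) z hz
      rwa [Real.dist_eq] at this
    rw [dist_comm z x]
    exact h1.trans h2

private lemma descSlope_nonneg' {X : Type*} [MetricSpace X] (h : X → ℝ) (x : X)
    (hbdd : IsBoundedUnder (· ≤ ·) (nhdsWithin x {x}ᶜ)
      (fun z => max (h x - h z) 0 / dist z x)) :
    0 ≤ descSlope h x := by
  rcases eq_or_neBot (nhdsWithin x {x}ᶜ) with hB | hB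
  · rw [descSlope, hB, limsup_eq]
    simp only [eventually_bot, Set.setOf_true]
    exact (Real.sInf_of_not_bddBelow not_bddBelow_univ).ge
  · exact le_limsup_of_frequently_le
      (Frequently.of_forall fun z => div_nonneg (le_max_right _ _) dist_nonneg) hbdd

/-- on a geodesic space, a (locally Lipschitz) geodesically convex
function `h` satisfies `h x - h y ≤ d(x,y) |∇⁻h|(x)`, and consequently
`0 ≤ (h x - Q_t h x)/t ≤ (1/4)|∇⁻h(x)|²` for every `t > 0`. -/
theorem convex_slope_infConv {X : Type*} [MetricSpace X]
    (hgeo : ∀ x y : X, ∃ γ : ℝ → X, γ 0 = x ∧ γ 1 = y ∧ IsUnitGeodesic γ)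
    (h : X → ℝ)
    (hconv : ∀ γ : ℝ → X, IsUnitGeodesic γ → ∀ t ∈ Icc (0:ℝ) 1,
      h (γ t) ≤ (1 - t) * h (γ 0) + t * h (γ 1))
    (hloclip : ∀ x : X, ∃ ε > (0:ℝ), ∃ K : NNReal,
      LipschitzOnWith K h (Metric.ball x ε)) :
    (∀ x y : X, h x - h y ≤ dist x y * descSlope h x) ∧
    (∀ t : ℝ, 0 < t → ∀ x : X,
      0 ≤ (h x - ⨅ y : X, h y + dist x y ^ 2 / t) / t ∧
      (h x - ⨅ y : X, h y + dist x y ^ 2 / t) / t ≤ (1 / 4) * (descSlope h x) ^ 2) := by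
  have main : ∀ x y : X, h x - h y ≤ dist x y * descSlope h x := by
    intro x y
    have hbdd := slope_bddAbove h x (hloclip x)
    have hS := descSlope_nonneg' h x hbdd
    rcases le_or_gt (h x) (h y) with hxy | hxy
    · have := mul_nonneg (dist_nonneg : (0:ℝ) ≤ dist x y) hS; linarith
    rcases eq_or_ne x y with rfl | hne
    · linarith
    have hd : 0 < dist x y := dist_pos.mpr hne
    obtain ⟨γ, hγ0, hγ1, hγ⟩ := hgeo x y
    set c := (h x - h y) / dist x y with hc
    have key : ∀ s : ℝ, 0 < s → s ≤ 1 →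
        c ≤ max (h x - h (γ s)) 0 / dist (γ s) x ∧ dist (γ s) x = s * dist x y := by
      intro s hs0 hs1
      have hsI : s ∈ Icc (0:ℝ) 1 := ⟨hs0.le, hs1⟩
      have hdist : dist (γ s) x = s * dist x y := by
        have h0I : (0:ℝ) ∈ Icc (0:ℝ) 1 := ⟨le_refl 0, zero_le_one⟩
        have := hγ s hsI 0 h0I
        rw [hγ0, hγ1] at this
        simpa [abs_of_nonneg hs0.le] using this
      refine ⟨?_, hdist⟩
      have hcv := hconv γ hγ s hsI
      rw [hγ0, hγ1] at hcv
      have h2 : h x - h (γ s) ≤ max (h x - h (γ s)) 0 := le_max_left _ _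
      rw [hdist, hc, div_le_div_iff₀ hd (by positivity)]
      calc (h x - h y) * (s * dist x y) = (s * (h x - h y)) * dist x y := by ring
        _ ≤ (h x - h (γ s)) * dist x y := by nlinarith
        _ ≤ max (h x - h (γ s)) 0 * dist x y := by nlinarith
    have hfreq : ∃ᶠ z in nhdsWithin x {x}ᶜ, c ≤ max (h x - h z) 0 / dist z x := by
      rw [frequently_iff]
      intro U hU
      obtain ⟨δ, hδ, hδU⟩ := Metric.mem_nhdsWithin_iff.mp hU
      set s := min 1 (δ / (2 * dist x y)) with hs
      have hs0 : 0 < s := lt_min one_pos (by positivity)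
      have hs1 : s ≤ 1 := min_le_left _ _
      obtain ⟨hle, hdist⟩ := key s hs0 hs1
      refine ⟨γ s, hδU ⟨?_, ?_⟩, hle⟩
      · rw [Metric.mem_ball, hdist]
        calc s * dist x y ≤ (δ / (2 * dist x y)) * dist x y :=
              mul_le_mul_of_nonneg_right (min_le_right _ _) dist_nonneg
          _ = δ / 2 := by field_simp
          _ < δ := by linarith
      · intro hEq
        simp only [Set.mem_compl_iff, Set.mem_singleton_iff] at hEq
        rw [hEq, dist_self] at hdist
        nlinarith
    have hcle : c ≤ descSlope h x := le_limsup_of_frequently_le hfreq hbdd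
    have : c * dist x y ≤ descSlope h x * dist x y :=
      mul_le_mul_of_nonneg_right hcle dist_nonneg
    rw [hc, div_mul_cancel₀ _ hd.ne'] at this
    linarith [this]
  refine ⟨main, fun t ht x => ?_⟩
  have hbdd := slope_bddAbove h x (hloclip x)
  have hS := descSlope_nonneg' h x hbdd
  set S := descSlope h x with hSdef
  have lb : ∀ y : X, h x - t * S ^ 2 / 4 ≤ h y + dist x y ^ 2 / t := by
    intro y
    have h1 := main x y
    have hq : h x - h y - t * S ^ 2 / 4 ≤ dist x y ^ 2 / t := by
      rw [le_div_iff₀ ht]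
      nlinarith [sq_nonneg (dist x y - t * S / 2),
        mul_le_mul_of_nonneg_right h1 ht.le]
    linarith
  have hbdd2 : BddBelow (Set.range fun y : X => h y + dist x y ^ 2 / t) := by
    refine ⟨h x - t * S ^ 2 / 4, ?_⟩
    rintro _ ⟨y, rfl⟩
    exact lb y
  have hQle : (⨅ y : X, h y + dist x y ^ 2 / t) ≤ h x := by
    have := ciInf_le hbdd2 x
    simpa using this
  haveI : Nonempty X := ⟨x⟩
  have hQge : h x - t * S ^ 2 / 4 ≤ ⨅ y : X, h y + dist x y ^ 2 / t := le_ciInf lb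
  constructor
  · exact div_nonneg (by linarith) ht.le
  · rw [div_le_iff₀ ht]
    nlinarith [hQge]
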